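/- The quaternionic 2×2 matrix t = (1/2)·[[j−k, 1−i], [−j−k, 1+i]] is unitary and has order 10. -/

import Mathlib

noncomputable section
open Quaternion Matrix

abbrev HQ := ℍ[ℝ]
def qi : HQ := ⟨0,1,0,0⟩
def qj : HQ := ⟨0,0,1,0⟩
def qk : HQ := ⟨0,0,0,1⟩

/-- Inner product on the right ℍ-module ℍ^d. -/
def inprod {d : ℕ} (v w : Fin d → HQ) : HQ := ∑ m, star (v m) * w m


/-- The matrix t = (1/2)[[j−k, 1−i],[−j−k, 1+i]]. -/
def tMat : Matrix (Fin 2) (Fin 2) HQ :=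
  (((2:ℝ)⁻¹ : HQ)) • !![qj - qk, 1 - qi; -qj - qk, 1 + qi]

/-! ### Auxiliary machinery -/

def q (a b c d : ℝ) : HQ := ⟨a,b,c,d⟩

lemma qmul (a b c d a' b' c' d' : ℝ) : q a b c d * q a' b' c' d' =
    q (a*a'-b*b'-c*c'-d*d') (a*b'+b*a'+c*d'-d*c') (a*c'-b*d'+c*a'+d*b') (a*d'+b*c'-c*b'+d*a') := by
  ext <;> simp [Quaternion.re_mul, Quaternion.imI_mul, Quaternion.imJ_mul, Quaternion.imK_mul] <;> simp [q]

lemma qadd (a b c d a' b' c' d' : ℝ) : q a b c d + q a' b' c' d' =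
    q (a+a') (b+b') (c+c') (d+d') := by
  ext <;> simp <;> simp [q]

lemma qstar (a b c d : ℝ) : star (q a b c d) = q a (-b) (-c) (-d) := by
  ext <;> simp <;> simp [q]

lemma tMat_eq : tMat = !![q 0 0 (1/2) (-1/2), q (1/2) (-1/2) 0 0;
    q 0 0 (-1/2) (-1/2), q (1/2) (1/2) 0 0] := by
  refine Matrix.ext fun i j => ?_
  fin_cases i <;> fin_cases j <;>
    · ext <;> simp [tMat, ← Quaternion.coe_inv] <;> simp [q, qi, qj, qk] <;> norm_num

def M2 : Matrix (Fin 2) (Fin 2) HQ :=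
  !![q (-1/2) 0 (-1/2) 0, q (1/2) 0 (1/2) 0; q 0 (1/2) 0 (-1/2), q 0 (1/2) 0 (-1/2)]

def M4 : Matrix (Fin 2) (Fin 2) HQ :=
  !![q 0 0 (1/2) (-1/2), q 0 0 (-1/2) (-1/2); q (-1/2) (-1/2) 0 0, q (-1/2) (1/2) 0 0]

lemma hU : tMatᴴ * tMat = 1 := by
  rw [tMat_eq]
  refine Matrix.ext fun i j => ?_
  fin_cases i <;> fin_cases j <;>
    · ext <;>
        simp [Matrix.mul_apply, Fin.sum_univ_two, Matrix.conjTranspose_apply,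
          qstar, qmul, qadd, Matrix.one_apply] <;> simp [q] <;> norm_num

lemma h2 : tMat * tMat = M2 := by
  rw [tMat_eq]
  refine Matrix.ext fun i j => ?_
  fin_cases i <;> fin_cases j <;>
    · ext <;> simp [Matrix.mul_apply, Fin.sum_univ_two, qmul, qadd, M2] <;> simp [q] <;> norm_num

lemma h4 : M2 * M2 = M4 := by
  refine Matrix.ext fun i j => ?_
  fin_cases i <;> fin_cases j <;>
    · ext <;> simp [Matrix.mul_apply, Fin.sum_univ_two, qmul, qadd, M2, M4] <;> simp [q] <;> norm_num

lemma h5' : M4 * tMat = -1 := by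
  rw [tMat_eq]
  refine Matrix.ext fun i j => ?_
  fin_cases i <;> fin_cases j <;>
    · ext <;>
        simp [Matrix.mul_apply, Fin.sum_univ_two, qmul, qadd, M4,
          Matrix.one_apply] <;> simp [q] <;> norm_num

lemma h5 : tMat ^ 5 = -1 := by
  have : tMat ^ 5 = (tMat ^ 2) ^ 2 * tMat := by
    rw [← pow_mul, ← pow_succ]
  rw [this, sq, sq, h2, h4, h5']

/-- t is unitary and has order 10. -/
theorem tMat_unitary_order_ten : tMatᴴ * tMat = 1 ∧ orderOf tMat = 10 := by
  refine ⟨hU, ?_⟩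
  have h10 : tMat ^ 10 = 1 := by
    have : tMat ^ 10 = (tMat ^ 5) ^ 2 := by rw [← pow_mul]
    rw [this, h5, neg_one_sq]
  refine orderOf_eq_of_pow_and_pow_div_prime (by norm_num) h10 ?_
  intro p hp hpd
  have hb1 : 2 ≤ p := hp.two_le
  have hb2 : p ≤ 10 := Nat.le_of_dvd (by norm_num) hpd
  interval_cases p <;> try (exfalso; revert hp hpd; decide)
  · -- p = 2 : tMat ^ 5 ≠ 1
    rw [show (10/2 : ℕ) = 5 from rfl, h5]
    intro h
    have := congrArg (fun M => (M 0 0).re) h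
    simp [Matrix.one_apply] at this
    norm_num at this
  · rw [show (10/5 : ℕ) = 2 from rfl, sq, h2]
    intro h
    have := congrArg (fun M => (M 0 0).re) h
    simp [M2, Matrix.one_apply, q] at this
    norm_num at this
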